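/- There exists a unique solution (x_1, …, x_N) of the MIW recursion that satisfies x_1 + ⋯ + x_N = 0 and is strictly decreasing (x_1 > x_2 > ⋯ > x_N); moreover, this solution is zero-median. -/

import Mathlib

noncomputable section

/-- Partial sums `S_n = x_1 + ⋯ + x_n`. -/
def Ssum (x : ℕ → ℝ) (n : ℕ) : ℝ := ∑ i ∈ Finset.Icc 1 n, x i

/-- `x` is a solution of the MIW recursion
`x_{n+1} = x_n - 1/(x_1 + ⋯ + x_n)` for `1 ≤ n ≤ N - 1`. -/
def IsMIW (N : ℕ) (x : ℕ → ℝ) : Prop :=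
  ∀ n, 1 ≤ n → n ≤ N - 1 → Ssum x n ≠ 0 ∧ x (n + 1) = x n - 1 / Ssum x n

/-- Zero-median: `x_m = 0` if `N` is odd and `x_m = -x_{m+1}` if `N` is even,
where `m = (N+1)/2` if `N` is odd and `m = N/2` if `N` is even. -/
def ZeroMedian (N : ℕ) (x : ℕ → ℝ) : Prop :=
  if N % 2 = 1 then x ((N + 1) / 2) = 0 else x (N / 2) = -x (N / 2 + 1)

namespace MIWaux

def gf (a : ℝ) : ℕ → ℝ × ℝ
  | 0 => (a, a)
  | n + 1 => ((gf a n).1 + ((gf a n).2 - 1 / (gf a n).1), (gf a n).2 - 1 / (gf a n).1)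

@[simp] lemma gf_zero (a : ℝ) : gf a 0 = (a, a) := rfl

lemma gf_succ (a : ℝ) (n : ℕ) :
    gf a (n + 1) =
      ((gf a n).1 + ((gf a n).2 - 1 / (gf a n).1), (gf a n).2 - 1 / (gf a n).1) := rfl

lemma gf_mono {a b : ℝ} (hab : a < b) :
    ∀ n, (∀ k < n, 0 < (gf a k).1) → (gf a n).1 < (gf b n).1 ∧ (gf a n).2 < (gf b n).2 := by
  intro n
  induction n with
  | zero => intro _; exact ⟨hab, hab⟩
  | succ n ih =>
    intro h
    obtain ⟨h1, h2⟩ := ih (fun k hk => h k (Nat.lt_succ_of_lt hk))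
    have hpa := h n (Nat.lt_succ_self n)
    have hinv : 1 / (gf b n).1 < 1 / (gf a n).1 := one_div_lt_one_div_of_lt hpa h1
    constructor <;> simp only [gf_succ] <;> linarith

lemma gf_cont (n : ℕ) {a : ℝ} (h : ∀ k < n, 0 < (gf a k).1) :
    ContinuousAt (fun b => gf b n) a := by
  induction n with
  | zero => exact (continuous_id.prodMk continuous_id).continuousAt
  | succ n ih =>
    have hih := ih (fun k hk => h k (Nat.lt_succ_of_lt hk))
    have h1 : ContinuousAt (fun b => (gf b n).1) a := hih.fst
    have h2 : ContinuousAt (fun b => (gf b n).2) a := hih.snd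
    have hne : (gf a n).1 ≠ 0 := (h n (Nat.lt_succ_self n)).ne'
    have hdiv : ContinuousAt (fun b => 1 / (gf b n).1) a := continuousAt_const.div h1 hne
    simp only [gf_succ]
    exact (h1.add (h2.sub hdiv)).prodMk (h2.sub hdiv)

lemma gf_large : ∀ (k : ℕ) (a : ℝ), (k : ℝ) + 1 ≤ a →
    1 ≤ (gf a k).1 ∧ a - k ≤ (gf a k).2 := by
  intro k
  induction k with
  | zero => intro a ha; norm_num at ha ⊢; exact ha
  | succ k ih =>
    intro a ha
    have ha' : (k : ℝ) + 1 ≤ a := by push_cast at ha ⊢; linarith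
    obtain ⟨h1, h2⟩ := ih a ha'
    have hpos : 0 < (gf a k).1 := by linarith
    have hinv : 1 / (gf a k).1 ≤ 1 := by
      rw [div_le_one hpos]; exact h1
    have hx : a - (k + 1 : ℕ) ≤ (gf a (k + 1)).2 := by
      simp only [gf_succ]; push_cast; linarith
    refine ⟨?_, hx⟩
    simp only [gf_succ]
    push_cast at ha
    linarith

lemma gf_x_le : ∀ (n : ℕ) (a : ℝ), (∀ k < n, 0 < (gf a k).1) → (gf a n).2 ≤ a := by
  intro n
  induction n with
  | zero => intro a _; simp
  | succ n ih =>
    intro a h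
    have h1 := ih a (fun k hk => h k (Nat.lt_succ_of_lt hk))
    have hpos := h n (Nat.lt_succ_self n)
    have : 0 < 1 / (gf a n).1 := by positivity
    simp only [gf_succ]; linarith

lemma gf_x_lt : ∀ (n j : ℕ) (a : ℝ), j < n → (∀ k < n, 0 < (gf a k).1) →
    (gf a n).2 ≤ a - 1 / (gf a j).1 := by
  intro n
  induction n with
  | zero => intro j a hj _; omega
  | succ n ih =>
    intro j a hj h
    rcases Nat.lt_succ_iff_lt_or_eq.mp hj with hj' | rfl
    · have h1 := ih j a hj' (fun k hk => h k (Nat.lt_succ_of_lt hk))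
      have hpos := h n (Nat.lt_succ_self n)
      have : 0 < 1 / (gf a n).1 := by positivity
      simp only [gf_succ]; linarith
    · have h1 := gf_x_le j a (fun k hk => h k (Nat.lt_succ_of_lt hk))
      simp only [gf_succ]; linarith

end MIWaux

open MIWaux Filter Topology

/-- There exists a unique (on indices `1, …, N`) solution of the MIW recursion which has
zero mean `x_1 + ⋯ + x_N = 0` and is strictly decreasing `x_1 > ⋯ > x_N`;
moreover, this solution is zero-median. -/
theorem exists_unique_strictDecreasing_zeroMean_solution (N : ℕ) (hN : 2 ≤ N) :
    ∃ x : ℕ → ℝ,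
      (IsMIW N x ∧ (∑ i ∈ Finset.Icc 1 N, x i) = 0 ∧
        (∀ n, 1 ≤ n → n < N → x (n + 1) < x n)) ∧
      ZeroMedian N x ∧
      (∀ y : ℕ → ℝ, IsMIW N y → (∑ i ∈ Finset.Icc 1 N, y i) = 0 →
        (∀ n, 1 ≤ n → n < N → y (n + 1) < y n) →
        ∀ n, 1 ≤ n → n ≤ N → y n = x n) := by
  -- the set of starting values for which S_1, …, S_{N-1} are all positive
  set D : Set ℝ := {a | ∀ k < N - 1, 0 < (gf a k).1} with hD_def
  have hND : (N : ℝ) ∈ D := by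
    intro k hk
    have : (k : ℝ) + 1 ≤ (N : ℝ) := by
      have : k + 1 ≤ N := by omega
      exact_mod_cast this
    linarith [(gf_large k (N : ℝ) this).1]
  have hDne : D.Nonempty := ⟨N, hND⟩
  have hDbdd : BddBelow D := ⟨0, fun a ha => le_of_lt (by simpa using ha 0 (by omega))⟩
  set c := sInf D with hc_def
  have hc0 : 0 ≤ c := le_csInf hDne (fun a ha => le_of_lt (by simpa using ha 0 (by omega)))
  -- D is upward closed
  have hup : ∀ a ∈ D, ∀ b, a < b → b ∈ D := by
    intro a ha b hab k hk
    have := (gf_mono hab k (fun j hj => ha j (hj.trans hk))).1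
    linarith [ha k hk]
  have hDmem : ∀ a, c < a → a ∈ D := by
    intro a ha
    obtain ⟨t, htD, hta⟩ := exists_lt_of_csInf_lt hDne ha
    exact hup t htD a hta
  have hcD : c ∉ D := by
    intro h
    have hev : ∀ᶠ b in 𝓝 c, b ∈ D := by
      have hall : ∀ k ∈ Finset.range (N - 1), ∀ᶠ b in 𝓝 c, 0 < (gf b k).1 := by
        intro k hk
        have hk' := Finset.mem_range.mp hk
        have hcont : ContinuousAt (fun b => (gf b k).1) c :=
          (gf_cont k (fun j hj => h j (hj.trans hk'))).fst
        exact hcont.eventually (eventually_gt_nhds (h k hk'))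
      have := (Filter.eventually_all_finset (Finset.range (N - 1))).2 hall
      filter_upwards [this] with b hb k hk
      exact hb k (Finset.mem_range.mpr hk)
    have hev' : ∀ᶠ b in 𝓝[<] c, b ∈ D ∧ b < c := by
      filter_upwards [hev.filter_mono nhdsWithin_le_nhds,
        eventually_mem_nhdsWithin] with b hb1 hb2
      exact ⟨hb1, hb2⟩
    obtain ⟨b, hbD, hbc⟩ := hev'.exists
    exact absurd (csInf_le hDbdd hbD) (not_le.mpr hbc)
  set F : ℝ → ℝ := fun a => (gf a (N - 1)).1 with hF_def
  have hFmono : ∀ a ∈ D, ∀ b, a < b → F a < F b := by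
    intro a ha b hab
    exact (gf_mono hab (N - 1) ha).1
  have hFcont : ∀ a ∈ D, ContinuousAt F a := fun a ha => (gf_cont (N - 1) ha).fst
  set T : Set ℝ := {a | c < a ∧ 0 ≤ F a} with hT_def
  have hTne : T.Nonempty := by
    refine ⟨max (N : ℝ) (c + 1), lt_of_lt_of_le (by linarith) (le_max_right _ _), ?_⟩
    have hge : ((N - 1 : ℕ) : ℝ) + 1 ≤ max (N : ℝ) (c + 1) := by
      have h1 : ((N - 1 : ℕ) : ℝ) + 1 = (N : ℝ) := by
        have : (N - 1) + 1 = N := by omega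
        exact_mod_cast this
      rw [h1]; exact le_max_left _ _
    have := (gf_large (N - 1) _ hge).1
    simp only [hF_def]; linarith
  have hTbdd : BddBelow T := ⟨c, fun t ht => ht.1.le⟩
  set s := sInf T with hs_def
  have hsc : c ≤ s := le_csInf hTne (fun t ht => ht.1.le)
  -- the key lower bound: s > c
  have hcs : c < s := by
    rcases lt_or_eq_of_le hsc with h | h
    · exact h
    -- suppose s = c; then F ≥ 0 on all of (c, ∞)
    exfalso
    have hFnn : ∀ a, c < a → 0 ≤ F a := by
      intro a ha
      have : sInf T < a := by rw [← hs_def, ← h]; exact ha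
      obtain ⟨t, htT, hta⟩ := exists_lt_of_csInf_lt hTne this
      exact le_of_lt (lt_of_le_of_lt htT.2 (hFmono t (hDmem t htT.1) a hta))
    set M : ℝ := (gf (c + 1) (N - 2)).1 with hM_def
    have hc1D : (c + 1) ∈ D := hDmem _ (by linarith)
    have hM : 0 < M := hc1D (N - 2) (by omega)
    have hMc : 0 < M + c + 1 := by linarith
    -- uniform lower bound on all partial sums near c
    have hbound : ∀ a, c < a → a < c + 1 → ∀ j < N - 1, 1 / (M + c + 1) ≤ (gf a j).1 := by
      intro a ha ha1 j hj
      have haD : a ∈ D := hDmem a ha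
      have hxle : (gf a (N - 1)).2 ≤ a - 1 / (gf a j).1 := gf_x_lt (N - 1) j a hj haD
      have hsplit : F a = (gf a (N - 2)).1 + (gf a (N - 1)).2 := by
        rw [hF_def]
        have e : N - 1 = (N - 2) + 1 := by omega
        simp [e, gf_succ]
      have hS2 : (gf a (N - 2)).1 < M :=
        (gf_mono ha1 (N - 2) (fun k hk => haD k (by omega))).1
      have h0F := hFnn a ha
      have hjpos : 0 < (gf a j).1 := haD j hj
      have hlt : 1 / (gf a j).1 < M + c + 1 := by
        rw [hsplit] at h0F
        linarith
      rw [div_le_iff₀ hMc]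
      rw [div_lt_iff₀ hjpos] at hlt
      nlinarith
    -- show c itself lies in D, contradiction
    have hkey : ∀ k, k < N - 1 → 0 < (gf c k).1 := by
      intro k
      induction k using Nat.strong_induction_on with
      | _ k ih =>
        intro hk
        have hcont : ContinuousAt (fun b => (gf b k).1) c :=
          (gf_cont k (fun j hj => ih j hj (hj.trans hk))).fst
        have htend : Tendsto (fun b => (gf b k).1) (𝓝[>] c) (𝓝 ((gf c k).1)) :=
          hcont.continuousWithinAt
        have hev : ∀ᶠ b in 𝓝[>] c, 1 / (M + c + 1) ≤ (gf b k).1 := by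
          have h1 : ∀ᶠ b in 𝓝[>] c, b < c + 1 :=
            (eventually_lt_nhds (by linarith : c < c + 1)).filter_mono nhdsWithin_le_nhds
          filter_upwards [h1, eventually_mem_nhdsWithin] with b hb1 hb2
          exact hbound b hb2 hb1 k hk
        have : 1 / (M + c + 1) ≤ (gf c k).1 := ge_of_tendsto htend hev
        have : 0 < 1 / (M + c + 1) := by positivity
        linarith [ge_of_tendsto htend hev]
    exact hcD hkey
  have hsD : s ∈ D := hDmem s hcs
  have hFs0 : F s = 0 := by
    have h1 : 0 ≤ F s := by
      have hev : ∀ᶠ b in 𝓝[>] s, 0 ≤ F b := by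
        filter_upwards [eventually_mem_nhdsWithin] with b hb
        obtain ⟨t, htT, htb⟩ := exists_lt_of_csInf_lt hTne hb
        exact le_of_lt (lt_of_le_of_lt htT.2 (hFmono t (hDmem t htT.1) b htb))
      exact ge_of_tendsto ((hFcont s hsD).continuousWithinAt) hev
    have h2 : ¬ 0 < F s := by
      intro hpos
      have hev : ∀ᶠ b in 𝓝 s, 0 < F b ∧ c < b := by
        filter_upwards [(hFcont s hsD).eventually (eventually_gt_nhds hpos),
          eventually_gt_nhds hcs] with b hb1 hb2
        exact ⟨hb1, hb2⟩
      have hev' : ∀ᶠ b in 𝓝[<] s, b ∈ T ∧ b < s := by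
        filter_upwards [hev.filter_mono nhdsWithin_le_nhds,
          eventually_mem_nhdsWithin] with b hb1 hb2
        exact ⟨⟨hb1.2, hb1.1.le⟩, hb2⟩
      obtain ⟨b, hbT, hbs⟩ := hev'.exists
      exact absurd (csInf_le hTbdd hbT) (not_le.mpr hbs)
    rcases lt_or_eq_of_le h1 with h | h
    · exact absurd h h2
    · exact h.symm
  -- the solution
  set x : ℕ → ℝ := fun n => (gf s (n - 1)).2 with hx_def
  have hSsum : ∀ n, 1 ≤ n → Ssum x n = (gf s (n - 1)).1 := by
    intro n hn
    induction n, hn using Nat.le_induction with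
    | base => simp [Ssum, hx_def]
    | succ n hn ih =>
      obtain ⟨m, rfl⟩ : ∃ m, n = m + 1 := ⟨n - 1, by omega⟩
      have hsum : Ssum x (m + 1 + 1) = Ssum x (m + 1) + x (m + 1 + 1) := by
        unfold Ssum
        rw [← Finset.sum_Icc_succ_top (by omega : 1 ≤ m + 1 + 1)]
      rw [hsum, ih]
      simp only [hx_def]
      simp [gf_succ]
  have hSpos : ∀ n, 1 ≤ n → n ≤ N - 1 → 0 < Ssum x n := by
    intro n h1 h2
    rw [hSsum n h1]
    exact hsD (n - 1) (by omega)
  have hMIW : IsMIW N x := by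
    intro n h1 h2
    refine ⟨(hSpos n h1 h2).ne', ?_⟩
    obtain ⟨m, rfl⟩ : ∃ m, n = m + 1 := ⟨n - 1, by omega⟩
    rw [hSsum (m + 1) (by omega)]
    simp only [hx_def]
    simp [gf_succ]
  have hsum0 : Ssum x N = 0 := by
    rw [hSsum N (by omega)]
    exact hFs0
  have hdec : ∀ n, 1 ≤ n → n < N → x (n + 1) < x n := by
    intro n h1 h2
    obtain ⟨_, hrec⟩ := hMIW n h1 (by omega)
    have hp : 0 < 1 / Ssum x n := by
      have := hSpos n h1 (by omega); positivity
    rw [hrec]; linarith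
  -- uniqueness
  have huniq : ∀ y : ℕ → ℝ, IsMIW N y → Ssum y N = 0 →
      (∀ n, 1 ≤ n → n < N → y (n + 1) < y n) → ∀ n, 1 ≤ n → n ≤ N → y n = x n := by
    intro y hy hysum hydec
    have hySpos : ∀ k, 1 ≤ k → k ≤ N - 1 → 0 < Ssum y k := by
      intro k hk1 hk2
      obtain ⟨hne, hrec⟩ := hy k hk1 hk2
      have hlt := hydec k hk1 (by omega)
      rw [hrec] at hlt
      have : 0 < 1 / Ssum y k := by linarith
      exact one_div_pos.mp this
    set b : ℝ := y 1 with hb_def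
    have claim : ∀ k, 1 ≤ k → k ≤ N → y k = (gf b (k - 1)).2 ∧ Ssum y k = (gf b (k - 1)).1 := by
      intro k hk1
      induction k, hk1 using Nat.le_induction with
      | base => intro _; constructor <;> simp [Ssum, hb_def]
      | succ k hk ih =>
        intro hkN
        obtain ⟨m, rfl⟩ : ∃ m, k = m + 1 := ⟨k - 1, by omega⟩
        have hkN' : m + 1 ≤ N - 1 := by omega
        obtain ⟨hne, hrec⟩ := hy (m + 1) (by omega) hkN'
        obtain ⟨hy1, hy2⟩ := ih (by omega)
        simp only [Nat.add_sub_cancel] at hy1 hy2 ⊢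
        constructor
        · rw [hrec, hy1, hy2, gf_succ]
        · have hsum : Ssum y (m + 1 + 1) = Ssum y (m + 1) + y (m + 1 + 1) := by
            unfold Ssum
            rw [← Finset.sum_Icc_succ_top (by omega : 1 ≤ m + 1 + 1)]
          rw [hsum, hy2, hrec, hy1, hy2, gf_succ]
    have hbD : b ∈ D := by
      intro k hk
      have h2 := (claim (k + 1) (by omega) (by omega)).2
      simp only [Nat.add_sub_cancel] at h2
      rw [← h2]
      exact hySpos (k + 1) (by omega) (by omega)
    have hbc : c < b := lt_of_le_of_ne (csInf_le hDbdd hbD) (fun h => hcD (h ▸ hbD))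
    have hFb : F b = 0 := by
      have h2 := (claim N (by omega) le_rfl).2
      show (gf b (N - 1)).1 = 0
      rw [← h2]; exact hysum
    have hbs : b = s := by
      rcases lt_trichotomy b s with h | h | h
      · exfalso
        have := (gf_mono h (N - 1) hbD).1
        rw [show (gf b (N-1)).1 = F b from rfl, show (gf s (N-1)).1 = F s from rfl, hFb, hFs0] at this
        exact lt_irrefl 0 this
      · exact h
      · exfalso
        have := (gf_mono h (N - 1) hsD).1
        rw [show (gf s (N-1)).1 = F s from rfl, show (gf b (N-1)).1 = F b from rfl, hFb, hFs0] at this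
        exact lt_irrefl 0 this
    intro n hn1 hn2
    rw [(claim n hn1 hn2).1, hbs, hx_def]
  -- the reflected solution
  set z : ℕ → ℝ := fun n => -x (N + 1 - n) with hz_def
  have conv0 : ∀ q : ℕ, Finset.Icc 1 q = Finset.Ioc 0 q := by
    intro q; ext i; simp only [Finset.mem_Icc, Finset.mem_Ioc]; omega
  have conv1 : ∀ p q : ℕ, Finset.Icc (p + 1) q = Finset.Ioc p q := by
    intro p q; ext i; simp only [Finset.mem_Icc, Finset.mem_Ioc]; omega
  have hzs : ∀ n, 1 ≤ n → n ≤ N → Ssum z n = Ssum x (N - n) := by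
    intro n h1 hn
    have hre : ∑ i ∈ Finset.Icc 1 n, x (N + 1 - i) = ∑ j ∈ Finset.Icc (N - n + 1) N, x j := by
      refine Finset.sum_nbij' (i := fun i => N + 1 - i) (j := fun j => N + 1 - j) ?_ ?_ ?_ ?_ ?_
      · intro a ha; simp only [Finset.mem_Icc] at *; omega
      · intro a ha; simp only [Finset.mem_Icc] at *; omega
      · intro a ha; simp only [Finset.mem_Icc] at *; omega
      · intro a ha; simp only [Finset.mem_Icc] at *; omega
      · intro a ha; rfl
    have hsplit : (∑ i ∈ Finset.Ioc 0 (N - n), x i) + ∑ i ∈ Finset.Ioc (N - n) N, x i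
        = ∑ i ∈ Finset.Ioc 0 N, x i :=
      Finset.sum_Ioc_consecutive x (Nat.zero_le (N - n)) (Nat.sub_le N n)
    have e0 : Ssum x N = ∑ i ∈ Finset.Ioc 0 N, x i := by
      unfold Ssum; rw [conv0 N]
    have e1 : Ssum x (N - n) = ∑ i ∈ Finset.Ioc 0 (N - n), x i := by
      unfold Ssum; rw [conv0 (N - n)]
    have e2 : (∑ j ∈ Finset.Icc (N - n + 1) N, x j) = ∑ i ∈ Finset.Ioc (N - n) N, x i := by
      rw [conv1]
    have hz1 : Ssum z n = -∑ i ∈ Finset.Icc 1 n, x (N + 1 - i) := by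
      unfold Ssum
      simp only [hz_def]
      rw [Finset.sum_neg_distrib]
    rw [hz1, hre, e2, e1]
    rw [e0] at hsum0
    linarith
  have hzMIW : IsMIW N z := by
    intro n h1 h2
    have hzpos : 0 < Ssum z n := by
      rw [hzs n h1 (by omega)]
      exact hSpos (N - n) (by omega) (by omega)
    refine ⟨hzpos.ne', ?_⟩
    obtain ⟨_, hrec⟩ := hMIW (N - n) (by omega) (by omega)
    have e3 : N - n + 1 = N + 1 - n := by omega
    have e4 : N + 1 - (n + 1) = N - n := by omega
    rw [hzs n h1 (by omega)]
    simp only [hz_def]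
    rw [e4, ← e3, hrec]
    ring
  have hzsum : Ssum z N = 0 := by
    rw [hzs N (by omega) le_rfl, Nat.sub_self]
    unfold Ssum
    rw [Finset.Icc_eq_empty (by omega)]
    simp
  have hzdec : ∀ n, 1 ≤ n → n < N → z (n + 1) < z n := by
    intro n h1 h2
    have hlt := hdec (N - n) (by omega) (by omega)
    simp only [hz_def]
    have e3 : N - n + 1 = N + 1 - n := by omega
    have e4 : N + 1 - (n + 1) = N - n := by omega
    rw [e4, ← e3]
    linarith
  have hzm : ZeroMedian N x := by
    unfold ZeroMedian
    split_ifs with hpar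
    · have := huniq z hzMIW hzsum hzdec ((N + 1) / 2) (by omega) (by omega)
      simp only [hz_def] at this
      rw [show N + 1 - (N + 1) / 2 = (N + 1) / 2 from by omega] at this
      linarith
    · have := huniq z hzMIW hzsum hzdec (N / 2) (by omega) (by omega)
      simp only [hz_def] at this
      rw [show N + 1 - N / 2 = N / 2 + 1 from by omega] at this
      linarith
  exact ⟨x, ⟨hMIW, hsum0, hdec⟩, hzm, fun y hy h0 hd => huniq y hy h0 hd⟩
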